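/- arXiv:2106.12886 — 6 statements merged into one kernel-verified Lean document; each statement's English description precedes it below -/
import Mathlib

section
/- For the hinge loss φ_h(α) = c·max{0, 1−α} with c > 0, and for η ∈ [0,1], define C_φ(a, η) = φ(a)·η + φ(−a)·(1−η), C⁺(η) = inf over a ∈ [0,1] of C_φ(a, η), and C⁻(η) = inf over a ∈ [−1, 0) of C_φ(a, η). Then C⁺(η) − C⁻(η) = c·(1 − 2η) for all η ∈ [0,1]. -/
open Set

/-- For the hinge loss `φ α = c * max 0 (1 - α)` with `c > 0`, the gap between the
constrained infima of the conditional risk `C a η = φ a * η + φ (-a) * (1 - η)`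
over `a ∈ [0,1]` and over `a ∈ [-1,0)` equals `c * (1 - 2η)` for every `η ∈ [0,1]`. -/
theorem hinge_deltaC (c : ℝ) (hc : 0 < c) (φ : ℝ → ℝ)
    (hφ : ∀ α, φ α = c * max 0 (1 - α))
    (C : ℝ → ℝ → ℝ)
    (hC : ∀ a η, C a η = φ a * η + φ (-a) * (1 - η)) :
    ∀ η ∈ Icc (0:ℝ) 1,
      sInf ((fun a => C a η) '' Icc (0:ℝ) 1) -
        sInf ((fun a => C a η) '' Ico (-1:ℝ) 0) = c * (1 - 2 * η) := by
  intro η hη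
  obtain ⟨hη0, hη1⟩ := hη
  have key : ∀ a : ℝ, -1 ≤ a → a ≤ 1 → C a η = c + c * a * (1 - 2 * η) := by
    intro a h1 h2
    rw [hC, hφ, hφ, max_eq_right (by linarith), max_eq_right (by linarith)]
    ring
  by_cases hhalf : η ≤ 1/2
  · -- C⁺ = c, C⁻ = 2cη
    have h1 : sInf ((fun a => C a η) '' Icc (0:ℝ) 1) = c := by
      have lb : ∀ x ∈ (fun a => C a η) '' Icc (0:ℝ) 1, c ≤ x := by
        rintro x ⟨a, ⟨ha1, ha2⟩, rfl⟩
        dsimp only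
        rw [key a (by linarith) ha2]
        nlinarith [mul_nonneg (mul_nonneg hc.le ha1) (by linarith : (0:ℝ) ≤ 1 - 2 * η)]
      have mem : c ∈ (fun a => C a η) '' Icc (0:ℝ) 1 := by
        refine ⟨0, ⟨le_refl 0, by norm_num⟩, ?_⟩
        dsimp only
        rw [key 0 (by norm_num) (by norm_num)]; ring
      exact le_antisymm (csInf_le ⟨c, lb⟩ mem) (le_csInf ⟨c, mem⟩ lb)
    have h2 : sInf ((fun a => C a η) '' Ico (-1:ℝ) 0) = 2 * c * η := by
      have lb : ∀ x ∈ (fun a => C a η) '' Ico (-1:ℝ) 0, 2 * c * η ≤ x := by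
        rintro x ⟨a, ⟨ha1, ha2⟩, rfl⟩
        dsimp only
        rw [key a ha1 (by linarith)]
        nlinarith [mul_nonneg (mul_nonneg hc.le (by linarith : (0:ℝ) ≤ 1 + a))
          (by linarith : (0:ℝ) ≤ 1 - 2 * η)]
      have mem : 2 * c * η ∈ (fun a => C a η) '' Ico (-1:ℝ) 0 := by
        refine ⟨-1, ⟨le_refl (-1), by norm_num⟩, ?_⟩
        dsimp only
        rw [key (-1) (le_refl _) (by norm_num)]; ring
      exact le_antisymm (csInf_le ⟨_, lb⟩ mem) (le_csInf ⟨_, mem⟩ lb)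
    rw [h1, h2]; ring
  · push_neg at hhalf
    have h1 : sInf ((fun a => C a η) '' Icc (0:ℝ) 1) = 2 * c * (1 - η) := by
      have lb : ∀ x ∈ (fun a => C a η) '' Icc (0:ℝ) 1, 2 * c * (1 - η) ≤ x := by
        rintro x ⟨a, ⟨ha1, ha2⟩, rfl⟩
        dsimp only
        rw [key a (by linarith) ha2]
        nlinarith [mul_nonneg (mul_nonneg hc.le (by linarith : (0:ℝ) ≤ 1 - a))
          (by linarith : (0:ℝ) ≤ 2 * η - 1)]
      have mem : 2 * c * (1 - η) ∈ (fun a => C a η) '' Icc (0:ℝ) 1 := by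
        refine ⟨1, ⟨by norm_num, le_refl 1⟩, ?_⟩
        dsimp only
        rw [key 1 (by norm_num) (le_refl 1)]; ring
      exact le_antisymm (csInf_le ⟨_, lb⟩ mem) (le_csInf ⟨_, mem⟩ lb)
    have h2 : sInf ((fun a => C a η) '' Ico (-1:ℝ) 0) = c := by
      have glb : IsGLB ((fun a => C a η) '' Ico (-1:ℝ) 0) c := by
        constructor
        · rintro x ⟨a, ⟨ha1, ha2⟩, rfl⟩
          dsimp only
          rw [key a ha1 (by linarith)]
          nlinarith [mul_nonneg (mul_nonneg hc.le (by linarith : (0:ℝ) ≤ -a))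
            (by linarith : (0:ℝ) ≤ 2 * η - 1)]
        · intro b hb
          by_contra hbc
          push_neg at hbc
          set d : ℝ := c * (2 * η - 1) with hd
          have hdpos : 0 < d := by
            apply mul_pos hc; linarith
          set a : ℝ := max (-1/2) (-(b - c) / (2 * d)) with ha
          have ha1 : -1 ≤ a := le_trans (by norm_num) (le_max_left _ _)
          have ha2 : a < 0 := by
            apply max_lt (by norm_num)
            have : 0 < (b - c) / (2 * d) := by
              apply div_pos (by linarith) (by linarith)
            have hnd : -(b - c) / (2 * d) = -((b - c) / (2 * d)) := neg_div _ _
            linarith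
          have hmem : C a η ∈ (fun a => C a η) '' Ico (-1:ℝ) 0 :=
            ⟨a, ⟨ha1, ha2⟩, rfl⟩
          have hle := hb hmem
          rw [key a ha1 (by linarith)] at hle
          have haa : -(b - c) / (2 * d) ≤ a := le_max_right _ _
          have h2d : (0:ℝ) < 2 * d := by linarith
          have hineq : -(b - c) ≤ a * (2 * d) := (div_le_iff₀ h2d).mp haa
          have hrel : a * (2 * d) = -2 * (c * a * (1 - 2 * η)) := by rw [hd]; ring
          linarith
      exact glb.csInf_eq ⟨C (-1/2) η, ⟨-1/2, ⟨by norm_num, by norm_num⟩, rfl⟩⟩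
    rw [h1, h2]; ring
end

section
/- Generalized Zhang inequality: Let μ be a probability measure on X, η : X → [0,1] measurable, 𝒢 a class of measurable subsets of X, and φ a surrogate loss with ΔC_φ(η) = c(1 − 2η) for some c > 0 and all η ∈ [0,1]. Let 𝓕_𝒢 be the class of measurable f : X → [−1, 1] whose 0-level set G_f = {x : f(x) ≥ 0} belongs to 𝒢. Then for every f ∈ 𝓕_𝒢, c·( R(f) − inf_{g ∈ 𝓕_𝒢} R(g) ) ≤ R_φ(f) − inf_{g ∈ 𝓕_𝒢} R_φ(g), where R(f) = E[1{Y·sign(f(X)) ≤ 0}] is the classification risk and R_φ(f) = E[φ(Y f(X))] is the surrogate risk. -/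
open MeasureTheory Set

/-- The sign function: `sgn a = 1` if `a ≥ 0`, `-1` otherwise. -/
noncomputable def sgn (a : ℝ) : ℝ := if 0 ≤ a then 1 else -1

namespace ZhangAux

noncomputable def Cst (φ : ℝ → ℝ) (a p : ℝ) : ℝ := φ a * p + φ (-a) * (1 - p)

noncomputable def Hp (φ : ℝ → ℝ) (p : ℝ) : ℝ := sInf ((fun a => Cst φ a p) '' Icc 0 1)
noncomputable def Hm (φ : ℝ → ℝ) (p : ℝ) : ℝ := sInf ((fun a => Cst φ a p) '' Ico (-1) 0)

variable {φ : ℝ → ℝ} {M : ℝ}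

lemma contC (hφ : Continuous φ) (p : ℝ) : Continuous fun a => Cst φ a p :=
  ((hφ.mul continuous_const).add ((hφ.comp continuous_neg).mul continuous_const))

lemma neP (p : ℝ) : ((fun a => Cst φ a p) '' Icc 0 1).Nonempty :=
  ⟨_, mem_image_of_mem _ (by norm_num : (0:ℝ) ∈ Icc (0:ℝ) 1)⟩

lemma neM (p : ℝ) : ((fun a => Cst φ a p) '' Ico (-1) 0).Nonempty :=
  ⟨_, mem_image_of_mem _ (by norm_num : (-1:ℝ) ∈ Ico (-1:ℝ) 0)⟩

lemma bddP (hφ : Continuous φ) (p : ℝ) : BddBelow ((fun a => Cst φ a p) '' Icc 0 1) :=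
  (isCompact_Icc.image (contC hφ p)).bddBelow

lemma bddM (hφ : Continuous φ) (p : ℝ) : BddBelow ((fun a => Cst φ a p) '' Ico (-1) 0) := by
  have h : ((fun a => Cst φ a p) '' Ico (-1) 0) ⊆ ((fun a => Cst φ a p) '' Icc (-1) 0) :=
    image_mono Ico_subset_Icc_self
  exact ((isCompact_Icc.image (contC hφ p)).bddBelow).mono h

lemma Hp_le (hφ : Continuous φ) (p : ℝ) {a : ℝ} (ha : a ∈ Icc (0:ℝ) 1) : Hp φ p ≤ Cst φ a p :=
  csInf_le (bddP hφ p) ⟨a, ha, rfl⟩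

lemma Hm_le (hφ : Continuous φ) (p : ℝ) {a : ℝ} (ha : a ∈ Ico (-1:ℝ) 0) : Hm φ p ≤ Cst φ a p :=
  csInf_le (bddM hφ p) ⟨a, ha, rfl⟩

lemma lipCst (hM : ∀ a ∈ Icc (-1:ℝ) 1, |φ a| ≤ M) {a : ℝ} (ha : a ∈ Icc (-1:ℝ) 1) (p q : ℝ) :
    |Cst φ a p - Cst φ a q| ≤ (2*M) * |p - q| := by
  have h1 := abs_le.mp (hM a ha)
  have h2 := abs_le.mp (hM (-a) ⟨by linarith [ha.2], by linarith [ha.1]⟩)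
  have he : Cst φ a p - Cst φ a q = (φ a - φ (-a)) * (p - q) := by unfold Cst; ring
  rw [he, abs_mul]
  have h3 : |φ a - φ (-a)| ≤ 2*M := abs_le.mpr ⟨by linarith, by linarith⟩
  exact mul_le_mul_of_nonneg_right h3 (abs_nonneg _) |>.trans_eq rfl

lemma lip_sInf {S : Set ℝ} (hM : ∀ a ∈ Icc (-1:ℝ) 1, |φ a| ≤ M)
    (hS : S ⊆ Icc (-1:ℝ) 1) (hne : ∀ p, ((fun a => Cst φ a p) '' S).Nonempty)
    (hbdd : ∀ p, BddBelow ((fun a => Cst φ a p) '' S)) (p q : ℝ) :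
    |sInf ((fun a => Cst φ a p) '' S) - sInf ((fun a => Cst φ a q) '' S)| ≤ (2*M) * |p - q| := by
  have key : ∀ p q : ℝ, sInf ((fun a => Cst φ a p) '' S)
      ≤ sInf ((fun a => Cst φ a q) '' S) + (2*M) * |p - q| := by
    intro p q
    have : sInf ((fun a => Cst φ a p) '' S) - (2*M) * |p - q|
        ≤ sInf ((fun a => Cst φ a q) '' S) := by
      apply le_csInf (hne q)
      rintro y ⟨a, haS, rfl⟩
      dsimp only
      have h1 : sInf ((fun a => Cst φ a p) '' S) ≤ Cst φ a p := csInf_le (hbdd p) ⟨a, haS, rfl⟩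
      have h2 := (abs_le.mp (lipCst hM (hS haS) p q)).2
      linarith
    linarith
  have h1 := key p q
  have h2 := key q p
  rw [abs_sub_comm q p] at h2
  exact abs_le.mpr ⟨by linarith, by linarith⟩

lemma measurable_Hp (hφ : Continuous φ) (hM : ∀ a ∈ Icc (-1:ℝ) 1, |φ a| ≤ M) :
    Measurable (Hp φ) := by
  have hM0 : 0 ≤ M := le_trans (abs_nonneg _) (hM 0 (by norm_num))
  have hlip : LipschitzWith (2*M).toNNReal (Hp φ) := by
    apply LipschitzWith.of_dist_le_mul
    intro p q
    rw [Real.dist_eq, Real.dist_eq, Real.coe_toNNReal _ (by linarith)]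
    exact lip_sInf hM (Icc_subset_Icc (by norm_num) (by norm_num)) neP (bddP hφ) p q
  exact hlip.continuous.measurable

lemma measurable_Hm (hφ : Continuous φ) (hM : ∀ a ∈ Icc (-1:ℝ) 1, |φ a| ≤ M) :
    Measurable (Hm φ) := by
  have hM0 : 0 ≤ M := le_trans (abs_nonneg _) (hM 0 (by norm_num))
  have hlip : LipschitzWith (2*M).toNNReal (Hm φ) := by
    apply LipschitzWith.of_dist_le_mul
    intro p q
    rw [Real.dist_eq, Real.dist_eq, Real.coe_toNNReal _ (by linarith)]
    exact lip_sInf hM (Ico_subset_Icc_self.trans (Icc_subset_Icc (by norm_num) (by norm_num)))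
      neM (bddM hφ) p q
  exact hlip.continuous.measurable

lemma Cst_bound (hM : ∀ a ∈ Icc (-1:ℝ) 1, |φ a| ≤ M) {a p : ℝ} (ha : a ∈ Icc (-1:ℝ) 1)
    (hp : p ∈ Icc (0:ℝ) 1) : |Cst φ a p| ≤ M := by
  have h1 := abs_le.mp (hM a ha)
  have h2 := abs_le.mp (hM (-a) ⟨by linarith [ha.2], by linarith [ha.1]⟩)
  have hp1 := hp.1; have hp2 := hp.2
  rw [abs_le]; unfold Cst
  constructor <;> nlinarith

lemma Hp_bound (hφ : Continuous φ) (hM : ∀ a ∈ Icc (-1:ℝ) 1, |φ a| ≤ M) {p : ℝ}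
    (hp : p ∈ Icc (0:ℝ) 1) : |Hp φ p| ≤ M := by
  rw [abs_le]
  constructor
  · apply le_csInf (neP p)
    rintro y ⟨a, ha, rfl⟩
    exact (abs_le.mp (Cst_bound hM (Icc_subset_Icc (by norm_num) le_rfl ha) hp)).1
  · exact (Hp_le hφ p (by norm_num : (0:ℝ) ∈ Icc (0:ℝ) 1)).trans
      (abs_le.mp (Cst_bound hM (by norm_num) hp)).2

lemma Hm_bound (hφ : Continuous φ) (hM : ∀ a ∈ Icc (-1:ℝ) 1, |φ a| ≤ M) {p : ℝ}
    (hp : p ∈ Icc (0:ℝ) 1) : |Hm φ p| ≤ M := by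
  rw [abs_le]
  constructor
  · apply le_csInf (neM p)
    rintro y ⟨a, ha, rfl⟩
    exact (abs_le.mp (Cst_bound hM
      (Ico_subset_Icc_self.trans (Icc_subset_Icc le_rfl (by norm_num)) ha) hp)).1
  · exact (Hm_le hφ p (by norm_num : (-1:ℝ) ∈ Ico (-1:ℝ) 0)).trans
      (abs_le.mp (Cst_bound hM (by norm_num) hp)).2

noncomputable def aseq (n : ℕ) : ℝ := max 0 (min 1 (((Denumerable.eqv ℚ).symm n : ℚ) : ℝ))
noncomputable def bseq (n : ℕ) : ℝ :=
  if (((Denumerable.eqv ℚ).symm n : ℚ) : ℝ) ∈ Ico (-1:ℝ) 0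
    then (((Denumerable.eqv ℚ).symm n : ℚ) : ℝ) else -1

lemma aseq_mem (n : ℕ) : aseq n ∈ Icc (0:ℝ) 1 :=
  ⟨le_max_left _ _, max_le (by norm_num) (min_le_left _ _)⟩

lemma bseq_mem (n : ℕ) : bseq n ∈ Ico (-1:ℝ) 0 := by
  unfold bseq; split
  · assumption
  · norm_num

lemma aseq_surj {q : ℚ} (h0 : (0:ℝ) ≤ q) (h1 : (q:ℝ) ≤ 1) : ∃ n, aseq n = (q:ℝ) := by
  refine ⟨Denumerable.eqv ℚ q, ?_⟩
  unfold aseq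
  rw [Equiv.symm_apply_apply]
  rw [min_eq_right h1, max_eq_right h0]

lemma bseq_surj {q : ℚ} (h : (q:ℝ) ∈ Ico (-1:ℝ) 0) : ∃ n, bseq n = (q:ℝ) := by
  refine ⟨Denumerable.eqv ℚ q, ?_⟩
  unfold bseq
  rw [Equiv.symm_apply_apply, if_pos h]

lemma densePlus (hφ : Continuous φ) (p : ℝ) {ε : ℝ} (hε : 0 < ε) :
    ∃ n, Cst φ (aseq n) p < Hp φ p + ε := by
  have hcont : Continuous fun a => Cst φ a p := contC hφ p
  obtain ⟨a, ha, hae⟩ := (isCompact_Icc.image hcont).sInf_mem (neP p)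
  obtain ⟨δ, hδ, hball⟩ := Metric.continuousAt_iff.mp (hcont.continuousAt (x := a)) ε hε
  rcases eq_or_lt_of_le ha.2 with h1 | h1
  · obtain ⟨q, hq1, hq2⟩ := exists_rat_btwn (show max 0 (1-δ) < (1:ℝ) by
      apply max_lt one_pos; linarith)
    have hq0 : (0:ℝ) ≤ q := le_of_lt (lt_of_le_of_lt (le_max_left _ _) hq1)
    obtain ⟨n, hn⟩ := aseq_surj hq0 hq2.le
    refine ⟨n, ?_⟩
    have hdist : dist (q:ℝ) a < δ := by
      rw [Real.dist_eq, abs_lt]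
      have := lt_of_le_of_lt (le_max_right (0:ℝ) (1-δ)) hq1
      constructor <;> linarith
    have := hball hdist
    rw [Real.dist_eq, abs_lt] at this
    have hHp : Hp φ p = Cst φ a p := hae.symm
    rw [hn, hHp]
    linarith [this.1]
  · obtain ⟨q, hq1, hq2⟩ := exists_rat_btwn (show a < min 1 (a+δ) by
      apply lt_min h1; linarith)
    have hq0 : (0:ℝ) ≤ q := le_of_lt (lt_of_le_of_lt ha.1 hq1)
    have hqle1 : (q:ℝ) ≤ 1 := le_of_lt (lt_of_lt_of_le hq2 (min_le_left _ _))
    obtain ⟨n, hn⟩ := aseq_surj hq0 hqle1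
    refine ⟨n, ?_⟩
    have hdist : dist (q:ℝ) a < δ := by
      rw [Real.dist_eq, abs_lt]
      have := lt_of_lt_of_le hq2 (min_le_right _ _)
      constructor <;> linarith
    have := hball hdist
    rw [Real.dist_eq, abs_lt] at this
    have hHp : Hp φ p = Cst φ a p := hae.symm
    rw [hn, hHp]
    linarith [this.1]

lemma denseMinus (hφ : Continuous φ) (p : ℝ) {ε : ℝ} (hε : 0 < ε) :
    ∃ n, Cst φ (bseq n) p < Hm φ p + ε := by
  have hcont : Continuous fun a => Cst φ a p := contC hφ p
  obtain ⟨y, ⟨a, ha, rfl⟩, hy⟩ := (csInf_lt_iff (bddM hφ p) (neM p)).mp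
    (show Hm φ p < Hm φ p + ε/2 by linarith)
  dsimp only at hy
  obtain ⟨δ, hδ, hball⟩ := Metric.continuousAt_iff.mp (hcont.continuousAt (x := a)) (ε/2)
    (by linarith)
  obtain ⟨q, hq1, hq2⟩ := exists_rat_btwn (show a < min 0 (a+δ) by
    apply lt_min ha.2; linarith)
  have hqm : (q:ℝ) ∈ Ico (-1:ℝ) 0 :=
    ⟨le_of_lt (lt_of_le_of_lt ha.1 hq1), lt_of_lt_of_le hq2 (min_le_left _ _)⟩
  obtain ⟨n, hn⟩ := bseq_surj hqm
  refine ⟨n, ?_⟩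
  have hdist : dist (q:ℝ) a < δ := by
    rw [Real.dist_eq, abs_lt]
    have := lt_of_lt_of_le hq2 (min_le_right _ _)
    constructor <;> linarith
  have := hball hdist
  rw [Real.dist_eq, abs_lt] at this
  rw [hn]
  linarith [this.1]

end ZhangAux

open ZhangAux

/-- Generalized Zhang inequality: if the surrogate loss `φ` satisfies
`ΔC_φ(η) = c (1 - 2η)` with `c > 0` for all `η ∈ [0,1]`, then for every classifier
`f` in the `𝒢`-constrained class `𝓕_𝒢` (measurable, range in `[-1,1]`, prediction set
`{x : f x ≥ 0} ∈ 𝒢`),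
`c (R(f) - inf_{g ∈ 𝓕_𝒢} R(g)) ≤ R_φ(f) - inf_{g ∈ 𝓕_𝒢} R_φ(g)`,
where `R` is the classification risk and `R_φ` the surrogate risk. -/
theorem generalized_zhang_inequality {X : Type*} [MeasurableSpace X]
    (μ : Measure X) [IsProbabilityMeasure μ]
    (η : X → ℝ) (hη : Measurable η) (hη01 : ∀ x, η x ∈ Icc (0:ℝ) 1)
    (𝒢 : Set (Set X)) (h𝒢 : ∀ G ∈ 𝒢, MeasurableSet G)
    (φ : ℝ → ℝ) (hφc : Continuous φ) (c : ℝ) (hc : 0 < c)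
    (hΔ : ∀ p ∈ Icc (0:ℝ) 1,
      sInf ((fun a => φ a * p + φ (-a) * (1 - p)) '' Icc (0:ℝ) 1) -
        sInf ((fun a => φ a * p + φ (-a) * (1 - p)) '' Ico (-1:ℝ) 0)
          = c * (1 - 2 * p))
    (F : Set (X → ℝ))
    (hF : F = {f | Measurable f ∧ (∀ x, f x ∈ Icc (-1:ℝ) 1) ∧ {x | 0 ≤ f x} ∈ 𝒢})
    (R Rφ : (X → ℝ) → ℝ)
    (hR : ∀ f, R f = ∫ x, (η x * (if (1:ℝ) * sgn (f x) ≤ 0 then (1:ℝ) else 0)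
        + (1 - η x) * (if (-1:ℝ) * sgn (f x) ≤ 0 then (1:ℝ) else 0)) ∂μ)
    (hRφ : ∀ f, Rφ f = ∫ x, (η x * φ (f x) + (1 - η x) * φ (-(f x))) ∂μ) :
    ∀ f ∈ F, c * (R f - sInf (R '' F)) ≤ Rφ f - sInf (Rφ '' F) := by
  classical
  intro f hf
  obtain ⟨hfm, hfr, hfG⟩ : Measurable f ∧ (∀ x, f x ∈ Icc (-1:ℝ) 1) ∧ {x | 0 ≤ f x} ∈ 𝒢 := by
    rw [hF] at hf; exact hf
  -- a bound for φ on [-1,1]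
  obtain ⟨M, hMn⟩ := isCompact_Icc.exists_bound_of_continuousOn
    (hφc.continuousOn (s := Icc (-1:ℝ) 1))
  have hM : ∀ a ∈ Icc (-1:ℝ) 1, |φ a| ≤ M := fun a ha => by
    have := hMn a ha; rwa [Real.norm_eq_abs] at this
  have hM0 : 0 ≤ M := le_trans (abs_nonneg _) (hM 0 (by norm_num))
  have mHp := measurable_Hp hφc hM
  have mHm := measurable_Hm hφc hM
  -- difference formula
  have hHd : ∀ p ∈ Icc (0:ℝ) 1, Hp φ p - Hm φ p = c * (1 - 2*p) := by
    intro p hp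
    have := hΔ p hp
    simpa only [Hp, Hm, Cst] using this
  -- integrability of surrogate integrands
  have intSurr : ∀ (g : X → ℝ), Measurable g → (∀ x, g x ∈ Icc (-1:ℝ) 1) →
      Integrable (fun x => η x * φ (g x) + (1 - η x) * φ (-(g x))) μ := by
    intro g hg hgr
    have hmeas : Measurable fun x => η x * φ (g x) + (1 - η x) * φ (-(g x)) :=
      (hη.mul (hφc.measurable.comp hg)).add
        ((measurable_const.sub hη).mul (hφc.measurable.comp hg.neg))
    apply Integrable.mono' (integrable_const M) hmeas.aestronglyMeasurable
    filter_upwards with x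
    rw [Real.norm_eq_abs]
    have h0 := (hη01 x).1; have h1 := (hη01 x).2
    have b1 := abs_le.mp (hM (g x) (hgr x))
    have b2 := abs_le.mp (hM (-(g x)) ⟨by linarith [(hgr x).2], by linarith [(hgr x).1]⟩)
    rw [abs_le]; constructor <;> nlinarith
  -- integrability of the conditional-infimum integrands
  have intD : ∀ (g : X → ℝ), Measurable g →
      Integrable (fun x => if 0 ≤ g x then Hp φ (η x) else Hm φ (η x)) μ := by
    intro g hg
    have hset : MeasurableSet {x | 0 ≤ g x} := measurableSet_le measurable_const hg
    have hmeas : Measurable fun x => if 0 ≤ g x then Hp φ (η x) else Hm φ (η x) :=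
      Measurable.ite hset (mHp.comp hη) (mHm.comp hη)
    apply Integrable.mono' (integrable_const M) hmeas.aestronglyMeasurable
    filter_upwards with x
    rw [Real.norm_eq_abs]
    by_cases hx : 0 ≤ g x
    · rw [if_pos hx]; exact Hp_bound hφc hM (hη01 x)
    · rw [if_neg hx]; exact Hm_bound hφc hM (hη01 x)
  -- classification risk rewritten
  have hRalt : ∀ g : X → ℝ,
      R g = ∫ x, (η x + (1 - 2*η x) * (if 0 ≤ g x then (1:ℝ) else 0)) ∂μ := by
    intro g
    rw [hR g]
    apply integral_congr_ae (ae_of_all _ fun x => ?_)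
    by_cases hx : 0 ≤ g x <;> norm_num [sgn, hx] <;> ring_nf
  have intRalt : ∀ g : X → ℝ, Measurable g →
      Integrable (fun x => η x + (1 - 2*η x) * (if 0 ≤ g x then (1:ℝ) else 0)) μ := by
    intro g hg
    have hset : MeasurableSet {x | 0 ≤ g x} := measurableSet_le measurable_const hg
    have hmeas : Measurable fun x => η x + (1 - 2*η x) * (if 0 ≤ g x then (1:ℝ) else 0) :=
      hη.add ((measurable_const.sub (hη.const_mul 2)).mul
        (Measurable.ite hset measurable_const measurable_const))
    apply Integrable.mono' (integrable_const 2) hmeas.aestronglyMeasurable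
    filter_upwards with x
    rw [Real.norm_eq_abs]
    have h0 := (hη01 x).1; have h1 := (hη01 x).2
    by_cases hx : 0 ≤ g x
    · rw [if_pos hx, abs_le]; constructor <;> nlinarith
    · rw [if_neg hx, abs_le]; constructor <;> nlinarith
  -- Rφ via Cst
  have hRφC : ∀ g : X → ℝ, Rφ g = ∫ x, Cst φ (g x) (η x) ∂μ := by
    intro g
    rw [hRφ g]
    exact integral_congr_ae (ae_of_all _ fun x => by unfold Cst; ring)
  have intCst : ∀ (g : X → ℝ), Measurable g → (∀ x, g x ∈ Icc (-1:ℝ) 1) →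
      Integrable (fun x => Cst φ (g x) (η x)) μ := by
    intro g hg hgr
    exact (intSurr g hg hgr).congr (ae_of_all _ fun x => by unfold Cst; ring)
  -- pointwise lower bound on surrogate risk
  have lb : ∀ g : X → ℝ, Measurable g → (∀ x, g x ∈ Icc (-1:ℝ) 1) →
      (∫ x, (if 0 ≤ g x then Hp φ (η x) else Hm φ (η x)) ∂μ) ≤ Rφ g := by
    intro g hg hgr
    rw [hRφC g]
    apply integral_mono (intD g hg) (intCst g hg hgr)
    intro x
    dsimp only
    by_cases hx : 0 ≤ g x
    · rw [if_pos hx]; exact Hp_le hφc (η x) ⟨hx, (hgr x).2⟩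
    · rw [if_neg hx]; exact Hm_le hφc (η x) ⟨(hgr x).1, lt_of_not_ge hx⟩
  -- lower bounds for the images
  have hR_lb : ∀ g ∈ F, (0:ℝ) ≤ R g := by
    intro g hgF
    rw [hR g]
    apply integral_nonneg
    intro x
    have h0 := (hη01 x).1; have h1 := (hη01 x).2
    apply add_nonneg
    · exact mul_nonneg h0 (by split <;> norm_num)
    · exact mul_nonneg (by linarith) (by split <;> norm_num)
  have hRφ_lb : ∀ g ∈ F, -M ≤ Rφ g := by
    intro g hgF
    rw [hF] at hgF
    obtain ⟨hg, hgr, -⟩ := hgF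
    rw [hRφ g]
    have hpt : ∀ x, (-M : ℝ) ≤ η x * φ (g x) + (1 - η x) * φ (-(g x)) := by
      intro x
      have h0 := (hη01 x).1; have h1 := (hη01 x).2
      have b1 := abs_le.mp (hM (g x) (hgr x))
      have b2 := abs_le.mp (hM (-(g x)) ⟨by linarith [(hgr x).2], by linarith [(hgr x).1]⟩)
      nlinarith
    have := integral_mono (integrable_const (-M : ℝ)) (intSurr g hg hgr) hpt
    simpa [measure_univ] using this
  have neR : (R '' F).Nonempty := ⟨R f, ⟨f, hf, rfl⟩⟩
  have bddR : BddBelow (R '' F) := ⟨0, by rintro y ⟨g, hg, rfl⟩; exact hR_lb g hg⟩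
  have bddRφ : BddBelow (Rφ '' F) := ⟨-M, by rintro y ⟨g, hg, rfl⟩; exact hRφ_lb g hg⟩
  -- reduce to an ε-approximate statement
  suffices hsuf : ∀ ε : ℝ, 0 < ε → c * (R f - sInf (R '' F)) ≤ Rφ f - sInf (Rφ '' F) + ε by
    by_contra hcon
    push_neg at hcon
    have := hsuf ((c * (R f - sInf (R '' F)) - (Rφ f - sInf (Rφ '' F)))/2) (by linarith)
    linarith
  intro ε hε
  -- almost optimal classifier for the classification risk
  obtain ⟨y, ⟨g, hgF, rfl⟩, hyg⟩ := (csInf_lt_iff bddR neR).mp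
    (show sInf (R '' F) < sInf (R '' F) + ε/(2*c) by
      have : 0 < ε/(2*c) := by positivity
      linarith)
  obtain ⟨hgm, hgr, hgG⟩ : Measurable g ∧ (∀ x, g x ∈ Icc (-1:ℝ) 1) ∧ {x | 0 ≤ g x} ∈ 𝒢 := by
    rw [hF] at hgF; exact hgF
  -- measurable ε/2-near-minimizing selectors
  have exP : ∀ p : ℝ, ∃ n, Cst φ (aseq n) p < Hp φ p + ε/2 :=
    fun p => densePlus hφc p (by linarith)
  have exM : ∀ p : ℝ, ∃ n, Cst φ (bseq n) p < Hm φ p + ε/2 :=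
    fun p => denseMinus hφc p (by linarith)
  have msetP : ∀ n : ℕ, MeasurableSet {p : ℝ | Cst φ (aseq n) p < Hp φ p + ε/2} := by
    intro n
    apply measurableSet_lt
    · have : Continuous fun p : ℝ => Cst φ (aseq n) p := by
        unfold Cst
        exact (continuous_const.mul continuous_id).add
          (continuous_const.mul (continuous_const.sub continuous_id))
      exact this.measurable
    · exact mHp.add_const _
  have msetM : ∀ n : ℕ, MeasurableSet {p : ℝ | Cst φ (bseq n) p < Hm φ p + ε/2} := by
    intro n
    apply measurableSet_lt
    · have : Continuous fun p : ℝ => Cst φ (bseq n) p := by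
        unfold Cst
        exact (continuous_const.mul continuous_id).add
          (continuous_const.mul (continuous_const.sub continuous_id))
      exact this.measurable
    · exact mHm.add_const _
  have msp : Measurable fun p : ℝ => aseq (Nat.find (exP p)) :=
    Measurable.find (f := fun n (_ : ℝ) => aseq n) (fun n => measurable_const) msetP exP
  have msm : Measurable fun p : ℝ => bseq (Nat.find (exM p)) :=
    Measurable.find (f := fun n (_ : ℝ) => bseq n) (fun n => measurable_const) msetM exM
  -- the comparison classifier k
  set k : X → ℝ := fun x =>
    if 0 ≤ g x then aseq (Nat.find (exP (η x))) else bseq (Nat.find (exM (η x))) with hkdef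
  have hsetg : MeasurableSet {x | 0 ≤ g x} := measurableSet_le measurable_const hgm
  have hkm : Measurable k := Measurable.ite hsetg (msp.comp hη) (msm.comp hη)
  have hkr : ∀ x, k x ∈ Icc (-1:ℝ) 1 := by
    intro x
    simp only [hkdef]
    by_cases hx : 0 ≤ g x
    · rw [if_pos hx]
      have := aseq_mem (Nat.find (exP (η x)))
      exact ⟨by linarith [this.1], this.2⟩
    · rw [if_neg hx]
      have := bseq_mem (Nat.find (exM (η x)))
      exact ⟨this.1, by linarith [this.2]⟩
  have hkG : {x | 0 ≤ k x} = {x | 0 ≤ g x} := by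
    ext x
    simp only [mem_setOf_eq, hkdef]
    by_cases hx : 0 ≤ g x
    · rw [if_pos hx]
      exact iff_of_true (aseq_mem _).1 hx
    · rw [if_neg hx]
      exact iff_of_false (not_le.mpr (bseq_mem _).2) hx
  have hkF : k ∈ F := by
    rw [hF]
    exact ⟨hkm, hkr, by rw [hkG]; exact hgG⟩
  have hkval : ∀ x, Cst φ (k x) (η x)
      < (if 0 ≤ g x then Hp φ (η x) else Hm φ (η x)) + ε/2 := by
    intro x
    simp only [hkdef]
    by_cases hx : 0 ≤ g x
    · rw [if_pos hx, if_pos hx]; exact Nat.find_spec (exP (η x))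
    · rw [if_neg hx, if_neg hx]; exact Nat.find_spec (exM (η x))
  -- upper bound on Rφ k
  have ub : Rφ k ≤ (∫ x, (if 0 ≤ g x then Hp φ (η x) else Hm φ (η x)) ∂μ) + ε/2 := by
    rw [hRφC k]
    have step : (∫ x, Cst φ (k x) (η x) ∂μ)
        ≤ ∫ x, ((if 0 ≤ g x then Hp φ (η x) else Hm φ (η x)) + ε/2) ∂μ :=
      integral_mono (intCst k hkm hkr) ((intD g hgm).add (integrable_const _))
        (fun x => (hkval x).le)
    rwa [integral_add (intD g hgm) (integrable_const _), integral_const, probReal_univ,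
      one_smul] at step
  -- the difference identity
  have hRfg : R f - R g = ∫ x, ((1 - 2*η x) *
      ((if 0 ≤ f x then (1:ℝ) else 0) - (if 0 ≤ g x then (1:ℝ) else 0))) ∂μ := by
    rw [hRalt f, hRalt g, ← integral_sub (intRalt f hfm) (intRalt g hgm)]
    exact integral_congr_ae (ae_of_all _ fun x => by ring)
  have hdiff : (∫ x, (if 0 ≤ g x then Hp φ (η x) else Hm φ (η x)) ∂μ)
      - (∫ x, (if 0 ≤ f x then Hp φ (η x) else Hm φ (η x)) ∂μ)
      = -c * (R f - R g) := by
    rw [← integral_sub (intD g hgm) (intD f hfm)]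
    have hpt : ∀ x, (if 0 ≤ g x then Hp φ (η x) else Hm φ (η x))
        - (if 0 ≤ f x then Hp φ (η x) else Hm φ (η x))
        = (-c) * ((1 - 2*η x) * ((if 0 ≤ f x then (1:ℝ) else 0)
          - (if 0 ≤ g x then (1:ℝ) else 0))) := by
      intro x
      have hd := hHd (η x) (hη01 x)
      by_cases hx : 0 ≤ f x <;> by_cases hy : 0 ≤ g x
      · rw [if_pos hx, if_pos hy, if_pos hx, if_pos hy]; ring
      · rw [if_neg hy, if_pos hx, if_pos hx, if_neg hy]; linear_combination -hd
      · rw [if_pos hy, if_neg hx, if_neg hx, if_pos hy]; linear_combination hd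
      · rw [if_neg hy, if_neg hx, if_neg hx, if_neg hy]; ring
    rw [integral_congr_ae (ae_of_all _ hpt), integral_const_mul, ← hRfg]
  -- assemble
  have h1 : sInf (Rφ '' F) ≤ Rφ k := csInf_le bddRφ ⟨k, hkF, rfl⟩
  have h2 := lb f hfm hfr
  have h5 : c * (ε/(2*c)) = ε/2 := by field_simp
  have h6 : c * R g ≤ c * sInf (R '' F) + ε/2 := by
    have := mul_le_mul_of_nonneg_left hyg.le hc.le
    rw [mul_add, h5] at this
    linarith
  have e1 : c * (R f - sInf (R '' F)) = c * R f - c * sInf (R '' F) := by ring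
  have e2 : -c * (R f - R g) = -(c * R f) + c * R g := by ring
  linarith [h1, h2, ub, hdiff, h6, e1, e2]
end

section
/- Hinge risk of a step classifier: Let μ be a probability measure on X, η : X → [0,1] measurable, and for a measurable set G define 𝓡(G) = ∫ [η·1_{G^c} + (1−η)·1_G] dμ. Let f̃(x) = 2·Σ_{j=1}^J c_j·1{x ∈ G_j} − 1 with G_J ⊆ ⋯ ⊆ G_1 measurable, c_j ≥ 0, and Σ c_j = 1. Then the hinge risk R_{φ_h}(f̃) = E[max{0, 1 − Y f̃(X)}] satisfies R_{φ_h}(f̃) = 2·Σ_{j=1}^J c_j·𝓡(G_j). -/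
open MeasureTheory Set

/-- Hinge risk of a nested step classifier
`f(x) = 2 Σ_j c_j 1{x ∈ G_j} - 1` (with `G_J ⊆ ⋯ ⊆ G_1`, `c_j ≥ 0`, `Σ c_j = 1`):
`E[max{0, 1 - Y f(X)}] = 2 Σ_j c_j 𝓡(G_j)`, where
`𝓡(G) = ∫ [η 1_{Gᶜ} + (1-η) 1_G] dμ` is the classification risk of `G`. -/
theorem hinge_risk_step_classifier {X : Type*} [MeasurableSpace X]
    (μ : Measure X) [IsProbabilityMeasure μ]
    (η : X → ℝ) (hη : Measurable η) (hη01 : ∀ x, η x ∈ Icc (0:ℝ) 1)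
    (J : ℕ) (hJ : 1 ≤ J) (G : Fin J → Set X) (hGm : ∀ j, MeasurableSet (G j))
    (hnest : ∀ i j : Fin J, i ≤ j → G j ⊆ G i)
    (cw : Fin J → ℝ) (hcw : ∀ j, 0 ≤ cw j) (hsum : ∑ j, cw j = 1)
    (f : X → ℝ)
    (hf : ∀ x, f x = 2 * (∑ j, cw j * (G j).indicator (fun _ => (1:ℝ)) x) - 1)
    (RG : Set X → ℝ)
    (hRG : ∀ S : Set X, RG S = ∫ x, (η x * Sᶜ.indicator (fun _ => (1:ℝ)) x
        + (1 - η x) * S.indicator (fun _ => (1:ℝ)) x) ∂μ) :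
    (∫ x, (η x * max 0 (1 - f x) + (1 - η x) * max 0 (1 + f x)) ∂μ)
      = 2 * ∑ j, cw j * RG (G j) := by
  -- pointwise rewriting
  have hpt : ∀ x, η x * max 0 (1 - f x) + (1 - η x) * max 0 (1 + f x)
      = ∑ j, cw j * (2 * (η x * (G j)ᶜ.indicator (fun _ => (1:ℝ)) x
          + (1 - η x) * (G j).indicator (fun _ => (1:ℝ)) x)) := by
    intro x
    have hI : ∀ j, (0:ℝ) ≤ (G j).indicator (fun _ => (1:ℝ)) x ∧
        (G j).indicator (fun _ => (1:ℝ)) x ≤ 1 := by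
      intro j; by_cases h : x ∈ G j <;> simp [h]
    set S := ∑ j, cw j * (G j).indicator (fun _ => (1:ℝ)) x with hS
    have hS0 : 0 ≤ S := Finset.sum_nonneg fun j _ => mul_nonneg (hcw j) (hI j).1
    have hS1 : S ≤ 1 := by
      rw [← hsum]
      exact Finset.sum_le_sum fun j _ => by
        nlinarith [(hI j).2, hcw j]
    have h1 : max 0 (1 - f x) = 1 - f x := max_eq_right (by rw [hf x, ← hS]; linarith)
    have h2 : max 0 (1 + f x) = 1 + f x := max_eq_right (by rw [hf x, ← hS]; linarith)
    have hcompl : ∀ j, (G j)ᶜ.indicator (fun _ => (1:ℝ)) x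
        = 1 - (G j).indicator (fun _ => (1:ℝ)) x := by
      intro j; by_cases h : x ∈ G j <;> simp [h]
    have hterm : ∀ j ∈ Finset.univ, cw j * (2 * (η x * (G j)ᶜ.indicator (fun _ => (1:ℝ)) x
          + (1 - η x) * (G j).indicator (fun _ => (1:ℝ)) x))
        = 2 * η x * cw j + (2 - 4 * η x) * (cw j * (G j).indicator (fun _ => (1:ℝ)) x) := by
      intro j _; rw [hcompl j]; ring
    rw [Finset.sum_congr rfl hterm, Finset.sum_add_distrib, ← Finset.mul_sum,
      ← Finset.mul_sum, hsum, ← hS, h1, h2, hf x, ← hS]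
    ring
  have hint : ∀ S : Set X, MeasurableSet S → Integrable
      (fun x => η x * Sᶜ.indicator (fun _ => (1:ℝ)) x
        + (1 - η x) * S.indicator (fun _ => (1:ℝ)) x) μ := by
    intro S hSm
    apply Integrable.mono' (integrable_const (1:ℝ))
    · exact ((hη.mul (measurable_const.indicator hSm.compl)).add
        ((measurable_const.sub hη).mul (measurable_const.indicator hSm))).aestronglyMeasurable
    · filter_upwards with x
      obtain ⟨h0, h1⟩ := hη01 x
      by_cases h : x ∈ S <;>
        simp [h, abs_le] <;> constructor <;> linarith
  calc (∫ x, (η x * max 0 (1 - f x) + (1 - η x) * max 0 (1 + f x)) ∂μ)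
      = ∫ x, ∑ j, cw j * (2 * (η x * (G j)ᶜ.indicator (fun _ => (1:ℝ)) x
          + (1 - η x) * (G j).indicator (fun _ => (1:ℝ)) x)) ∂μ := by
        exact integral_congr_ae (Filter.Eventually.of_forall hpt)
    _ = ∑ j, ∫ x, cw j * (2 * (η x * (G j)ᶜ.indicator (fun _ => (1:ℝ)) x
          + (1 - η x) * (G j).indicator (fun _ => (1:ℝ)) x)) ∂μ := by
        exact integral_finset_sum _ fun j _ =>
          (((hint (G j) (hGm j)).const_mul 2).const_mul (cw j))
    _ = ∑ j, cw j * (2 * RG (G j)) := by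
        refine Finset.sum_congr rfl fun j _ => ?_
        rw [MeasureTheory.integral_const_mul, MeasureTheory.integral_const_mul, hRG (G j)]
    _ = 2 * ∑ j, cw j * RG (G j) := by
        rw [Finset.mul_sum]; exact Finset.sum_congr rfl fun j _ => by ring
end

section
/- Let μ be a probability measure on X, η : X → [0,1] measurable, 𝒢 a class of measurable subsets of X, and 𝓡(G) the classification risk of the prediction set G. Let 𝓕̃_{𝒢,J} be the class of step functions f(x) = 2Σ_{j=1}^J c_j 1{x ∈ G_j} − 1 with G_j ∈ 𝒢 nested (G_J ⊆ ⋯ ⊆ G_1), c_j ≥ 0, Σ c_j = 1. If G* minimizes 𝓡 over 𝒢, then f̃_{G*}(x) = 2·1{x ∈ G*} − 1 minimizes the hinge risk R_{φ_h} over 𝓕̃_{𝒢,J}, and inf_{f ∈ 𝓕̃_{𝒢,J}} R_{φ_h}(f) = 2·inf_{G ∈ 𝒢} 𝓡(G). -/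
open MeasureTheory Set

private lemma step_aux_integrable {X : Type*} [MeasurableSpace X]
    (μ : Measure X) [IsProbabilityMeasure μ]
    (η : X → ℝ) (hη : Measurable η) (hη01 : ∀ x, η x ∈ Icc (0:ℝ) 1)
    {S : Set X} (hS : MeasurableSet S) :
    Integrable (fun x => η x * Sᶜ.indicator (fun _ => (1:ℝ)) x
      + (1 - η x) * S.indicator (fun _ => (1:ℝ)) x) μ := by
  have hmeas : Measurable (fun x => η x * Sᶜ.indicator (fun _ => (1:ℝ)) x
      + (1 - η x) * S.indicator (fun _ => (1:ℝ)) x) :=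
    (hη.mul (measurable_const.indicator hS.compl)).add
      ((measurable_const.sub hη).mul (measurable_const.indicator hS))
  refine (integrable_const (1:ℝ)).mono' hmeas.aestronglyMeasurable ?_
  filter_upwards with x
  obtain ⟨h0, h1⟩ := hη01 x
  rw [Real.norm_eq_abs, abs_le]
  by_cases hx : x ∈ S
  · simp only [indicator, hx, mem_compl_iff, not_true_eq_false, if_false, if_true]
    constructor <;> nlinarith
  · simp only [indicator, hx, mem_compl_iff, not_false_eq_true, if_false, if_true]
    constructor <;> nlinarith

/-- If `G*` minimizes the classification risk `𝓡` over `𝒢`, then the step classifier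
`f̃_{G*}(x) = 2·1{x ∈ G*} - 1` minimizes the hinge risk over the class `𝓕̃_{𝒢,J}` of
nested step classifiers built from `𝒢`, and the minimal hinge risk over that class
equals `2 inf_{G ∈ 𝒢} 𝓡(G)`. -/
theorem step_classifier_minimizes_hinge {X : Type*} [MeasurableSpace X]
    (μ : Measure X) [IsProbabilityMeasure μ]
    (η : X → ℝ) (hη : Measurable η) (hη01 : ∀ x, η x ∈ Icc (0:ℝ) 1)
    (𝒢 : Set (Set X)) (h𝒢 : ∀ G ∈ 𝒢, MeasurableSet G)
    (J : ℕ) (hJ : 1 ≤ J)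
    (RG : Set X → ℝ)
    (hRG : ∀ S : Set X, RG S = ∫ x, (η x * Sᶜ.indicator (fun _ => (1:ℝ)) x
        + (1 - η x) * S.indicator (fun _ => (1:ℝ)) x) ∂μ)
    (Rh : (X → ℝ) → ℝ)
    (hRh : ∀ f, Rh f = ∫ x, (η x * max 0 (1 - f x)
        + (1 - η x) * max 0 (1 + f x)) ∂μ)
    (F : Set (X → ℝ))
    (hF : F = {f | ∃ (G : Fin J → Set X) (cw : Fin J → ℝ),
        (∀ j, G j ∈ 𝒢) ∧ (∀ i j : Fin J, i ≤ j → G j ⊆ G i) ∧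
        (∀ j, 0 ≤ cw j) ∧ (∑ j, cw j = 1) ∧
        ∀ x, f x = 2 * (∑ j, cw j * (G j).indicator (fun _ => (1:ℝ)) x) - 1})
    (Gstar : Set X) (hGs : Gstar ∈ 𝒢) (hGsmin : ∀ G ∈ 𝒢, RG Gstar ≤ RG G) :
    (fun x => 2 * Gstar.indicator (fun _ => (1:ℝ)) x - 1) ∈ F ∧
    (∀ f ∈ F, Rh (fun x => 2 * Gstar.indicator (fun _ => (1:ℝ)) x - 1) ≤ Rh f) ∧
    sInf (Rh '' F) = 2 * sInf (RG '' 𝒢) := by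
  have hJ0 : (J : ℝ) ≠ 0 := by positivity
  -- key identity : Rh f = 2 Σ cw_j RG (G j)
  have key : ∀ (G : Fin J → Set X) (cw : Fin J → ℝ), (∀ j, G j ∈ 𝒢) →
      (∀ j, 0 ≤ cw j) → (∑ j, cw j = 1) → ∀ f : X → ℝ,
      (∀ x, f x = 2 * (∑ j, cw j * (G j).indicator (fun _ => (1:ℝ)) x) - 1) →
      Rh f = ∑ j, cw j * (2 * RG (G j)) := by
    intro G cw hGmem hcw hsum f hf
    have hpt : ∀ x, η x * max 0 (1 - f x) + (1 - η x) * max 0 (1 + f x)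
        = ∑ j, cw j * (2 * (η x * (G j)ᶜ.indicator (fun _ => (1:ℝ)) x
            + (1 - η x) * (G j).indicator (fun _ => (1:ℝ)) x)) := by
      intro x
      obtain ⟨h0, h1⟩ := hη01 x
      set s : ℝ := ∑ j, cw j * (G j).indicator (fun _ => (1:ℝ)) x with hs
      have hind : ∀ j, (G j).indicator (fun _ => (1:ℝ)) x = 0 ∨
          (G j).indicator (fun _ => (1:ℝ)) x = 1 := by
        intro j; by_cases hx : x ∈ G j <;> simp [indicator, hx]
      have hs0 : 0 ≤ s := Finset.sum_nonneg fun j _ => by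
        rcases hind j with h | h <;> rw [h] <;> nlinarith [hcw j]
      have hs1 : s ≤ 1 := by
        rw [← hsum]
        refine Finset.sum_le_sum fun j _ => ?_
        rcases hind j with h | h <;> rw [h] <;> nlinarith [hcw j]
      have h1f : max 0 (1 - f x) = 2 - 2 * s := by
        rw [hf x, ← hs]; rw [max_eq_right (by linarith)]; ring
      have h2f : max 0 (1 + f x) = 2 * s := by
        rw [hf x, ← hs]; rw [max_eq_right (by linarith)]; ring
      have hterm : ∀ j, cw j * (2 * (η x * (G j)ᶜ.indicator (fun _ => (1:ℝ)) x
            + (1 - η x) * (G j).indicator (fun _ => (1:ℝ)) x))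
          = 2 * (cw j * η x) + 2 * ((1 - 2 * η x) * (cw j * (G j).indicator (fun _ => (1:ℝ)) x)) := by
        intro j
        by_cases hx : x ∈ G j <;>
          simp only [indicator, hx, mem_compl_iff, not_true_eq_false, not_false_eq_true,
            if_false, if_true] <;> ring
      rw [h1f, h2f, Finset.sum_congr rfl fun j _ => hterm j, Finset.sum_add_distrib,
        ← Finset.mul_sum, ← Finset.mul_sum, ← Finset.mul_sum, ← Finset.sum_mul, hsum, ← hs]
      ring
    have hint : ∀ j : Fin J, Integrable (fun x => cw j * (2 * (η x * (G j)ᶜ.indicator (fun _ => (1:ℝ)) x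
        + (1 - η x) * (G j).indicator (fun _ => (1:ℝ)) x))) μ := by
      intro j
      exact (((step_aux_integrable μ η hη hη01 (h𝒢 _ (hGmem j))).const_mul 2).const_mul (cw j))
    calc Rh f = ∫ x, ∑ j, cw j * (2 * (η x * (G j)ᶜ.indicator (fun _ => (1:ℝ)) x
          + (1 - η x) * (G j).indicator (fun _ => (1:ℝ)) x)) ∂μ := by
          rw [hRh]; exact integral_congr_ae (Filter.Eventually.of_forall hpt)
      _ = ∑ j, ∫ x, cw j * (2 * (η x * (G j)ᶜ.indicator (fun _ => (1:ℝ)) x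
          + (1 - η x) * (G j).indicator (fun _ => (1:ℝ)) x)) ∂μ :=
          integral_finset_sum _ fun j _ => hint j
      _ = ∑ j, cw j * (2 * RG (G j)) := by
          refine Finset.sum_congr rfl fun j _ => ?_
          rw [integral_const_mul, integral_const_mul, hRG]
  -- the candidate minimizer
  set f0 : X → ℝ := fun x => 2 * Gstar.indicator (fun _ => (1:ℝ)) x - 1 with hf0
  have hmem : f0 ∈ F := by
    rw [hF]
    refine ⟨fun _ => Gstar, fun _ => (1:ℝ)/J, fun _ => hGs, fun _ _ _ => subset_rfl,
      fun _ => by positivity, ?_, ?_⟩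
    · simp [Finset.sum_const, Finset.card_univ]
      field_simp
    · intro x
      rw [← Finset.sum_mul]
      simp [Finset.sum_const, Finset.card_univ]
      field_simp
      rfl
  have hRhf0 : Rh f0 = 2 * RG Gstar := by
    have := key (fun _ => Gstar) (fun _ => (1:ℝ)/J) (fun _ => hGs) (fun _ => by positivity)
      (by simp [Finset.sum_const, Finset.card_univ]; field_simp)
      f0 (fun x => by rw [← Finset.sum_mul]; simp [Finset.sum_const, Finset.card_univ]; field_simp; rfl)
    rw [this, ← Finset.sum_mul]
    simp [Finset.sum_const, Finset.card_univ]
    field_simp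
  have hmin : ∀ f ∈ F, Rh f0 ≤ Rh f := by
    intro f hfF
    rw [hF] at hfF
    obtain ⟨G, cw, hGmem, _, hcw, hsum, hfx⟩ := hfF
    rw [key G cw hGmem hcw hsum f hfx, hRhf0]
    calc 2 * RG Gstar = ∑ j, cw j * (2 * RG Gstar) := by
          rw [← Finset.sum_mul, hsum, one_mul]
      _ ≤ ∑ j, cw j * (2 * RG (G j)) := by
          refine Finset.sum_le_sum fun j _ => ?_
          have := hGsmin (G j) (hGmem j)
          nlinarith [hcw j]
  refine ⟨hmem, hmin, ?_⟩
  have h1 : IsLeast (Rh '' F) (Rh f0) :=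
    ⟨⟨f0, hmem, rfl⟩, by rintro _ ⟨f, hfF, rfl⟩; exact hmin f hfF⟩
  have h2 : IsLeast (RG '' 𝒢) (RG Gstar) :=
    ⟨⟨Gstar, hGs, rfl⟩, by rintro _ ⟨G, hG, rfl⟩; exact hGsmin G hG⟩
  rw [h1.csInf_eq, h2.csInf_eq, hRhf0]
end

section
/- Classification-preserving reduction for step functions: with the notation above, any minimizer f̃ of the hinge risk R_{φ_h} over 𝓕̃_{𝒢,J} has prediction set G_{f̃} = {x : f̃(x) ≥ 0} that minimizes the classification risk 𝓡 over 𝒢, i.e., R(f̃) = inf_{G ∈ 𝒢} 𝓡(G). -/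
open MeasureTheory Set

/-- Classification-preserving reduction for step functions: any minimizer `f̃` of the
hinge risk over the class `𝓕̃_{𝒢,J}` of nested step classifiers has prediction set
`G_{f̃} = {x : f̃ x ≥ 0}` that minimizes the classification risk `𝓡` over `𝒢`,
i.e. `𝓡(G_{f̃}) = inf_{G ∈ 𝒢} 𝓡(G)`. -/
theorem step_hinge_minimizer_is_risk_minimizer {X : Type*} [MeasurableSpace X]
    (μ : Measure X) [IsProbabilityMeasure μ]
    (η : X → ℝ) (hη : Measurable η) (hη01 : ∀ x, η x ∈ Icc (0:ℝ) 1)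
    (𝒢 : Set (Set X)) (h𝒢 : ∀ G ∈ 𝒢, MeasurableSet G)
    (J : ℕ) (hJ : 1 ≤ J)
    (RG : Set X → ℝ)
    (hRG : ∀ S : Set X, RG S = ∫ x, (η x * Sᶜ.indicator (fun _ => (1:ℝ)) x
        + (1 - η x) * S.indicator (fun _ => (1:ℝ)) x) ∂μ)
    (Rh : (X → ℝ) → ℝ)
    (hRh : ∀ f, Rh f = ∫ x, (η x * max 0 (1 - f x)
        + (1 - η x) * max 0 (1 + f x)) ∂μ)
    (F : Set (X → ℝ))
    (hF : F = {f | ∃ (G : Fin J → Set X) (cw : Fin J → ℝ),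
        (∀ j, G j ∈ 𝒢) ∧ (∀ i j : Fin J, i ≤ j → G j ⊆ G i) ∧
        (∀ j, 0 ≤ cw j) ∧ (∑ j, cw j = 1) ∧
        ∀ x, f x = 2 * (∑ j, cw j * (G j).indicator (fun _ => (1:ℝ)) x) - 1})
    (ftil : X → ℝ) (hftil : ftil ∈ F) (hmin : ∀ f ∈ F, Rh ftil ≤ Rh f) :
    (∀ G ∈ 𝒢, RG {x | 0 ≤ ftil x} ≤ RG G) ∧
    RG {x | 0 ≤ ftil x} = sInf (RG '' 𝒢) := by
  classical
  rw [hF] at hftil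
  obtain ⟨G, c, hG𝒢, hnest, hc0, hcsum, hfx⟩ := hftil
  -- abbreviations (as plain functions, definitionally transparent)
  let gf : Set X → X → ℝ := fun S x => 2 * S.indicator (fun _ => (1:ℝ)) x - 1
  let φ : (X → ℝ) → X → ℝ :=
    fun f x => η x * max 0 (1 - f x) + (1 - η x) * max 0 (1 + f x)
  have hRhφ : ∀ f, Rh f = ∫ x, φ f x ∂μ := fun f => hRh f
  -- indicator values
  have hind01 : ∀ (S : Set X) (x : X),
      S.indicator (fun _ => (1:ℝ)) x = 0 ∨ S.indicator (fun _ => (1:ℝ)) x = 1 := by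
    intro S x; by_cases hx : x ∈ S <;> simp [hx]
  -- membership of pure classifiers in F
  have hmemF : ∀ S ∈ 𝒢, gf S ∈ F := by
    intro S hS
    rw [hF]
    refine ⟨fun _ => S, c, fun _ => hS, fun _ _ _ => subset_rfl, hc0, hcsum, ?_⟩
    intro x
    show gf S x = 2 * (∑ _j : Fin J, c _j * S.indicator (fun _ => (1:ℝ)) x) - 1
    rw [← Finset.sum_mul, hcsum, one_mul]
  -- hinge risk of a pure classifier
  have hRhg : ∀ S : Set X, Rh (gf S) = 2 * RG S := by
    intro S
    rw [hRhφ, hRG, ← integral_const_mul]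
    congr 1
    funext x
    by_cases hx : x ∈ S <;>
      simp only [φ, gf, Set.indicator_of_mem, Set.indicator_of_notMem, hx,
        Set.mem_compl_iff, not_true, not_false_iff, if_true, if_false,
        Set.indicator_apply] <;>
      norm_num <;> ring
  have hub : ∀ H ∈ 𝒢, Rh ftil ≤ 2 * RG H := by
    intro H hH
    have := hmin _ (hmemF H hH)
    rwa [hRhg H] at this
  -- pointwise formula for φ on pure classifiers
  have hφg : ∀ (S : Set X) (x : X), φ (gf S) x = 1 + (1 - 2 * η x) * gf S x := by
    intro S x
    rcases hind01 S x with h | h <;>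
      simp only [φ, gf, h] <;> norm_num <;> ring
  -- ftil takes values in [-1, 1]
  have hSx : ∀ x, 0 ≤ (∑ j, c j * (G j).indicator (fun _ => (1:ℝ)) x) ∧
      (∑ j, c j * (G j).indicator (fun _ => (1:ℝ)) x) ≤ 1 := by
    intro x
    constructor
    · exact Finset.sum_nonneg fun j _ => mul_nonneg (hc0 j)
        (by rcases hind01 (G j) x with h | h <;> rw [h] <;> norm_num)
    · calc (∑ j, c j * (G j).indicator (fun _ => (1:ℝ)) x) ≤ ∑ j, c j := by
            refine Finset.sum_le_sum fun j _ => ?_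
            rcases hind01 (G j) x with h | h <;> rw [h] <;> simp [hc0 j]
        _ = 1 := hcsum
  have hφf : ∀ x, φ ftil x = 1 + (1 - 2 * η x) * ftil x := by
    intro x
    have h1 := (hSx x).1
    have h2 := (hSx x).2
    have hf1 : -1 ≤ ftil x := by rw [hfx x]; linarith
    have hf2 : ftil x ≤ 1 := by rw [hfx x]; linarith
    show η x * max 0 (1 - ftil x) + (1 - η x) * max 0 (1 + ftil x)
        = 1 + (1 - 2 * η x) * ftil x
    rw [max_eq_right (by linarith), max_eq_right (by linarith)]
    ring
  -- convexity identities for the weights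
  have key1 : ∀ t : Fin J → ℝ, ∑ j, c j * (2 * t j - 1) = 2 * (∑ j, c j * t j) - 1 := by
    intro t
    have h : ∑ j, c j * (2 * t j - 1) = (∑ j, 2 * (c j * t j)) - (∑ j, c j) := by
      rw [← Finset.sum_sub_distrib]
      exact Finset.sum_congr rfl fun j _ => by ring
    rw [h, ← Finset.mul_sum, hcsum]
  have key2 : ∀ (a : ℝ) (t : Fin J → ℝ),
      ∑ j, c j * (1 + a * t j) = 1 + a * ∑ j, c j * t j := by
    intro a t
    have h : ∑ j, c j * (1 + a * t j) = (∑ j, c j) + ∑ j, a * (c j * t j) := by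
      rw [← Finset.sum_add_distrib]
      exact Finset.sum_congr rfl fun j _ => by ring
    rw [h, hcsum, ← Finset.mul_sum]
  have hgsum : ∀ x, ∑ j, c j * gf (G j) x = ftil x := by
    intro x
    rw [hfx x]
    exact key1 fun j => (G j).indicator (fun _ => (1:ℝ)) x
  -- pointwise decomposition of the hinge integrand
  have hdecomp : ∀ x, φ ftil x = ∑ j, c j * φ (gf (G j)) x := by
    intro x
    calc φ ftil x = 1 + (1 - 2 * η x) * ftil x := hφf x
      _ = 1 + (1 - 2 * η x) * ∑ j, c j * gf (G j) x := by rw [hgsum]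
      _ = ∑ j, c j * (1 + (1 - 2 * η x) * gf (G j) x) := (key2 _ _).symm
      _ = ∑ j, c j * φ (gf (G j)) x :=
          Finset.sum_congr rfl fun j _ => by rw [hφg]
  -- integrability of each summand
  have hgval : ∀ (j : Fin J) (x : X), gf (G j) x = -1 ∨ gf (G j) x = 1 := by
    intro j x
    rcases hind01 (G j) x with h | h
    · left; show 2 * (G j).indicator (fun _ => (1:ℝ)) x - 1 = -1; rw [h]; ring
    · right; show 2 * (G j).indicator (fun _ => (1:ℝ)) x - 1 = 1; rw [h]; ring
  have hφint : ∀ j : Fin J, Integrable (fun x => c j * φ (gf (G j)) x) μ := by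
    intro j
    have hind : Measurable ((G j).indicator (fun _ => (1:ℝ))) :=
      measurable_const.indicator (h𝒢 _ (hG𝒢 j))
    have hmeas : Measurable fun x => c j * φ (gf (G j)) x := by
      refine measurable_const.mul ?_
      refine Measurable.add ?_ ?_
      · exact hη.mul (measurable_const.max
          (measurable_const.sub ((measurable_const.mul hind).sub measurable_const)))
      · exact (measurable_const.sub hη).mul (measurable_const.max
          (measurable_const.add ((measurable_const.mul hind).sub measurable_const)))
    refine (integrable_const (|c j| * 2)).mono' hmeas.aestronglyMeasurable
      (ae_of_all _ ?_)
    intro x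
    have hη' := hη01 x
    have hφb : |φ (gf (G j)) x| ≤ 2 := by
      rw [hφg]
      rcases hgval j x with h | h <;> rw [h] <;>
        refine abs_le.mpr ⟨by nlinarith [hη'.1, hη'.2], by nlinarith [hη'.1, hη'.2]⟩
    calc ‖c j * φ (gf (G j)) x‖ = |c j| * |φ (gf (G j)) x| := by
          rw [Real.norm_eq_abs, abs_mul]
      _ ≤ |c j| * 2 := mul_le_mul_of_nonneg_left hφb (abs_nonneg _)
  -- the hinge risk of ftil is the weighted average of the pure risks
  have hsum : Rh ftil = ∑ j, c j * (2 * RG (G j)) := by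
    rw [hRhφ]
    calc (∫ x, φ ftil x ∂μ) = ∫ x, ∑ j, c j * φ (gf (G j)) x ∂μ := by
          congr 1; funext x; exact hdecomp x
      _ = ∑ j, ∫ x, c j * φ (gf (G j)) x ∂μ :=
          integral_finset_sum _ fun j _ => hφint j
      _ = ∑ j, c j * ∫ x, φ (gf (G j)) x ∂μ :=
          Finset.sum_congr rfl fun j _ => integral_const_mul _ _
      _ = ∑ j, c j * (2 * RG (G j)) :=
          Finset.sum_congr rfl fun j _ => by rw [← hRhφ, hRhg]
  -- construct the index m
  obtain ⟨K, rfl⟩ : ∃ K, J = K + 1 := ⟨J - 1, by omega⟩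
  set T : Finset (Fin (K + 1)) :=
    Finset.univ.filter (fun j => (1:ℝ)/2 ≤ ∑ i ∈ Finset.Iic j, c i) with hT
  have hTne : T.Nonempty := by
    refine ⟨Fin.last K, ?_⟩
    rw [hT, Finset.mem_filter]
    refine ⟨Finset.mem_univ _, ?_⟩
    have hIic : Finset.Iic (Fin.last K) = Finset.univ := by
      ext i; simp [Fin.le_last]
    rw [hIic, hcsum]; norm_num
  set m := T.min' hTne with hm
  have hmmem : m ∈ T := T.min'_mem hTne
  have hmq : (1:ℝ)/2 ≤ ∑ i ∈ Finset.Iic m, c i := (Finset.mem_filter.mp hmmem).2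
  have hmmin : ∀ j ∈ T, m ≤ j := fun j hj => T.min'_le j hj
  -- the weight at m is positive
  have hcm : 0 < c m := by
    rcases lt_or_eq_of_le (hc0 m) with h | h
    · exact h
    · exfalso
      have hsplit : ∑ i ∈ Finset.Iic m, c i = c m + ∑ i ∈ Finset.Iio m, c i := by
        rw [← Finset.Iio_insert, Finset.sum_insert (by simp)]
      rw [hsplit, ← h, zero_add] at hmq
      rcases (Finset.Iio m).eq_empty_or_nonempty with he | hne
      · rw [he, Finset.sum_empty] at hmq; linarith
      · have hkm : (Finset.Iio m).max' hne < m :=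
          Finset.mem_Iio.mp ((Finset.Iio m).max'_mem hne)
        have hsub : Finset.Iio m ⊆ Finset.Iic ((Finset.Iio m).max' hne) :=
          fun j hj => Finset.mem_Iic.mpr (Finset.le_max' _ j hj)
        have hle : (1:ℝ)/2 ≤ ∑ i ∈ Finset.Iic ((Finset.Iio m).max' hne), c i :=
          le_trans hmq (Finset.sum_le_sum_of_subset_of_nonneg hsub fun i _ _ => hc0 i)
        have hkT : (Finset.Iio m).max' hne ∈ T := by
          rw [hT, Finset.mem_filter]; exact ⟨Finset.mem_univ _, hle⟩
        exact absurd (hmmin _ hkT) (not_le.mpr hkm)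
  -- the prediction set equals G m
  have hset : {x | 0 ≤ ftil x} = G m := by
    ext x
    simp only [mem_setOf_eq]
    rw [hfx x]
    constructor
    · intro hx0
      have hhalf : (1:ℝ)/2 ≤ ∑ j, c j * (G j).indicator (fun _ => (1:ℝ)) x := by
        linarith
      have hsum' : ∑ j, c j * (G j).indicator (fun _ => (1:ℝ)) x
          = ∑ j ∈ Finset.univ.filter (fun j => x ∈ G j), c j := by
        rw [Finset.sum_filter]
        exact Finset.sum_congr rfl fun j _ => by
          by_cases hx : x ∈ G j <;> simp [hx]
      rw [hsum'] at hhalf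
      rcases (Finset.univ.filter (fun j : Fin (K+1) => x ∈ G j)).eq_empty_or_nonempty
        with he | hne
      · rw [he, Finset.sum_empty] at hhalf; linarith
      · have hxk : x ∈ G ((Finset.univ.filter (fun j : Fin (K+1) => x ∈ G j)).max' hne) := by
          have hmem := (Finset.univ.filter (fun j : Fin (K+1) => x ∈ G j)).max'_mem hne
          rw [Finset.mem_filter] at hmem
          exact hmem.2
        have hsub : Finset.univ.filter (fun j : Fin (K+1) => x ∈ G j)
            ⊆ Finset.Iic ((Finset.univ.filter (fun j : Fin (K+1) => x ∈ G j)).max' hne) :=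
          fun j hj => Finset.mem_Iic.mpr (Finset.le_max' _ j hj)
        have hkT : (Finset.univ.filter (fun j : Fin (K+1) => x ∈ G j)).max' hne ∈ T := by
          rw [hT, Finset.mem_filter]
          exact ⟨Finset.mem_univ _, le_trans hhalf
            (Finset.sum_le_sum_of_subset_of_nonneg hsub fun i _ _ => hc0 i)⟩
        exact hnest m _ (hmmin _ hkT) hxk
    · intro hxm
      have h1 : ∑ i ∈ Finset.Iic m, c i ≤ ∑ j, c j * (G j).indicator (fun _ => (1:ℝ)) x := by
        have heq : ∀ i ∈ Finset.Iic m, c i = c i * (G i).indicator (fun _ => (1:ℝ)) x := by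
          intro i hi
          have hxi : x ∈ G i := hnest i m (Finset.mem_Iic.mp hi) hxm
          simp [hxi]
        rw [Finset.sum_congr rfl heq]
        refine Finset.sum_le_sum_of_subset_of_nonneg (Finset.subset_univ _) ?_
        intro j _ _
        exact mul_nonneg (hc0 j) (by by_cases hx : x ∈ G j <;> simp [hx])
      linarith [le_trans hmq h1]
  -- 2 RG (G m) = Rh ftil
  have hfinal : 2 * RG (G m) = Rh ftil := by
    have hz : ∑ j, c j * (2 * RG (G j) - Rh ftil) = 0 := by
      have h : ∑ j, c j * (2 * RG (G j) - Rh ftil)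
          = (∑ j, c j * (2 * RG (G j))) - (∑ j, c j) * Rh ftil := by
        rw [Finset.sum_mul, ← Finset.sum_sub_distrib]
        exact Finset.sum_congr rfl fun j _ => by ring
      rw [h, ← hsum, hcsum, one_mul, sub_self]
    have hterm := (Finset.sum_eq_zero_iff_of_nonneg (fun j _ =>
      mul_nonneg (hc0 j) (by linarith [hub (G j) (hG𝒢 j)]))).mp hz m (Finset.mem_univ m)
    rcases mul_eq_zero.mp hterm with h | h
    · exact absurd h (ne_of_gt hcm)
    · linarith
  rw [hset]
  have hlb : ∀ H ∈ 𝒢, RG (G m) ≤ RG H := fun H hH => by linarith [hub H hH]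
  refine ⟨hlb, ?_⟩
  have hleast : IsLeast (RG '' 𝒢) (RG (G m)) :=
    ⟨⟨G m, hG𝒢 m, rfl⟩, by rintro r ⟨H, hH, rfl⟩; exact hlb H hH⟩
  exact hleast.csInf_eq.symm
end

section
/- Binarizing Bernstein coefficients preserves empirical hinge-risk optimality (one-dimensional case): Let b_{kj}(x) = C(k, j) x^j (1−x)^{k−j} be the Bernstein basis on [0,1], and for θ ∈ [−1,1]^{k+1} with nondecreasing coordinates let B(θ, x) = Σ_{j=0}^k θ_j b_{kj}(x). Given data (y_i, x_i) ∈ {−1,1} × [0,1], i = 1, …, n, suppose θ̂ maximizes L(θ) = Σ_i y_i B(θ, x_i) over the polytope Θ̃ = {θ ∈ [−1,1]^{k+1} : θ_0 ≤ θ_1 ≤ ⋯ ≤ θ_k}. Then the vector θ† with θ†_j = sign(θ̂_j) ∈ {−1, 1} also lies in Θ̃ and maximizes L over Θ̃. -/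
open Set

/-- Binarizing Bernstein coefficients preserves empirical hinge-risk optimality
(one-dimensional case): if `θ̂` maximizes the linear objective
`L(θ) = Σ_i y_i Σ_j θ_j C(k,j) x_i^j (1 - x_i)^{k-j}` over the polytope
`Θ̃ = {θ ∈ [-1,1]^{k+1} : θ_0 ≤ ⋯ ≤ θ_k}`, then `θ†` with `θ†_j = sign(θ̂_j)`
also lies in `Θ̃` and maximizes `L` over `Θ̃`. -/
theorem bernstein_binarize_optimal (k n : ℕ) (y x : Fin n → ℝ)
    (hy : ∀ i, y i = 1 ∨ y i = -1) (hx : ∀ i, x i ∈ Icc (0:ℝ) 1)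
    (Θ : Set (Fin (k + 1) → ℝ))
    (hΘ : Θ = {θ | (∀ j, θ j ∈ Icc (-1:ℝ) 1) ∧ Monotone θ})
    (L : (Fin (k + 1) → ℝ) → ℝ)
    (hL : ∀ θ, L θ = ∑ i, y i * ∑ j : Fin (k + 1),
        θ j * ((k.choose (j : ℕ) : ℝ) * x i ^ (j : ℕ) * (1 - x i) ^ (k - (j : ℕ))))
    (θhat : Fin (k + 1) → ℝ) (hθhat : θhat ∈ Θ) (hmax : ∀ θ ∈ Θ, L θ ≤ L θhat)
    (θdag : Fin (k + 1) → ℝ)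
    (hθdag : ∀ j, θdag j = if 0 ≤ θhat j then 1 else -1) :
    θdag ∈ Θ ∧ ∀ θ ∈ Θ, L θ ≤ L θdag := by
  rw [hΘ] at hθhat
  obtain ⟨hb, hm⟩ := hθhat
  -- L is affine along directions
  have hlin : ∀ (s : ℝ) (θ d : Fin (k+1) → ℝ),
      L (fun j => θ j + s * d j) = L θ + s * L d := by
    intro s θ d
    simp only [hL, Finset.mul_sum]
    rw [← Finset.sum_add_distrib]
    refine Finset.sum_congr rfl fun i _ => ?_
    rw [← Finset.sum_add_distrib]
    refine Finset.sum_congr rfl fun j _ => ?_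
    ring
  -- the up and down directions
  set dp : Fin (k+1) → ℝ := fun j => if 0 ≤ θhat j then 1 - θhat j else 0 with hdp
  set dm : Fin (k+1) → ℝ := fun j => if 0 ≤ θhat j then 0 else -1 - θhat j with hdm
  -- choose a small step size t
  set ε : Fin (k+1) → ℝ := fun j => if 0 ≤ θhat j then 1 else -θhat j with hε
  have hεpos : ∀ j, 0 < ε j := by
    intro j
    simp only [hε]
    split
    · norm_num
    · next h => linarith [lt_of_not_ge h]
  have hne : (Finset.univ : Finset (Fin (k+1))).Nonempty := Finset.univ_nonempty
  set t : ℝ := Finset.univ.inf' hne ε with htdef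
  have htpos : 0 < t := by
    rw [htdef, Finset.lt_inf'_iff]
    intro j _
    exact hεpos j
  have htle : ∀ j, t ≤ ε j := fun j => Finset.inf'_le _ (Finset.mem_univ j)
  have ht1 : t ≤ 1 := by
    have := htle 0
    simp only [hε] at this
    split at this
    · exact this
    · linarith [(hb 0).1]
  -- membership of θdag
  have hmemdag : θdag ∈ Θ := by
    rw [hΘ]
    constructor
    · intro j
      rw [hθdag j]
      split <;> constructor <;> norm_num
    · intro a b hab
      rw [hθdag a, hθdag b]
      by_cases ha : 0 ≤ θhat a
      · have hbb : 0 ≤ θhat b := le_trans ha (hm hab)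
        simp [ha, hbb]
      · rw [if_neg ha]
        split <;> norm_num
  -- θhat - t • dp ∈ Θ
  have hmem1 : (fun j => θhat j + (-t) * dp j) ∈ Θ := by
    rw [hΘ]
    constructor
    · intro j
      simp only [hdp]
      by_cases h : 0 ≤ θhat j
      · simp only [h, if_pos]
        constructor
        · have h1 : t * (1 - θhat j) ≤ t := by nlinarith
          nlinarith
        · nlinarith [(hb j).2]
      · simp only [h, if_neg, not_false_iff]
        simpa using hb j
    · intro a b hab
      simp only [hdp]
      have hmab := hm hab
      by_cases ha : 0 ≤ θhat a
      · have hbb : 0 ≤ θhat b := le_trans ha hmab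
        simp only [ha, hbb, if_pos]
        nlinarith
      · by_cases hb' : 0 ≤ θhat b
        · simp only [ha, hb', if_pos, if_neg, not_false_iff]
          have := htle a
          simp only [hε, ha, if_neg, not_false_iff] at this
          nlinarith
        · simp only [ha, hb', if_neg, not_false_iff]
          linarith
  -- θhat - t • dm ∈ Θ
  have hmem2 : (fun j => θhat j + (-t) * dm j) ∈ Θ := by
    rw [hΘ]
    constructor
    · intro j
      simp only [hdm]
      by_cases h : 0 ≤ θhat j
      · simp only [h, if_pos]
        simpa using hb j
      · simp only [h, if_neg, not_false_iff]
        have hj := lt_of_not_ge h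
        constructor
        · nlinarith [(hb j).1]
        · nlinarith
    · intro a b hab
      simp only [hdm]
      have hmab := hm hab
      by_cases ha : 0 ≤ θhat a
      · have hbb : 0 ≤ θhat b := le_trans ha hmab
        simp only [ha, hbb, if_pos]
        linarith
      · by_cases hb' : 0 ≤ θhat b
        · simp only [ha, hb', if_pos, if_neg, not_false_iff]
          have := htle a
          simp only [hε, ha, if_neg, not_false_iff] at this
          have hha := lt_of_not_ge ha
          nlinarith
        · simp only [ha, hb', if_neg, not_false_iff]
          have hha := lt_of_not_ge ha
          have hhb := lt_of_not_ge hb'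
          nlinarith
  -- optimality forces L dp ≥ 0 and L dm ≥ 0
  have h1 := hmax _ hmem1
  rw [hlin (-t) θhat dp] at h1
  have hLdp : 0 ≤ L dp := by nlinarith
  have h2 := hmax _ hmem2
  rw [hlin (-t) θhat dm] at h2
  have hLdm : 0 ≤ L dm := by nlinarith
  -- decomposition of θdag
  have hdecomp : θdag = fun j => (fun j' => θhat j' + 1 * dp j') j + 1 * dm j := by
    funext j
    simp only [hdp, hdm, hθdag j, one_mul]
    by_cases h : 0 ≤ θhat j <;> simp [h] <;> ring
  have hval : L θdag = L θhat + L dp + L dm := by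
    rw [hdecomp, hlin 1 _ dm, hlin 1 θhat dp]
    ring
  refine ⟨hmemdag, fun θ hθ => ?_⟩
  have := hmax θ hθ
  linarith
end
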